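/- arXiv:1606.06161 — 2 statements merged into one kernel-verified Lean document; each statement's English description precedes it below -/
import Mathlib

section
/- Let H be a complex Hilbert space, λ ∈ (0,1), A ∈ B(H), and P = x⊗x a rank-one orthogonal projection on H (i.e., ‖x‖ = 1). Then Δ_λ(A∘P) = A if and only if A = α P for some α ∈ ℂ. -/
open scoped NNReal InnerProductSpace ComplexConjugate

noncomputable section

variable {H : Type*} [NormedAddCommGroup H] [InnerProductSpace ℂ H] [CompleteSpace H]

/-- The modulus `|T| = (T*T)^{1/2}` of a bounded operator. -/
def opAbs (T : H →L[ℂ] H) : H →L[ℂ] H := CFC.sqrt (star T * T)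

/-- `V` is the partial isometry appearing in the polar decomposition `T = V|T|`,
i.e. `V V* V = V`, `ker V = ker T` and `T = V|T|`. -/
def IsPolarPartialIsom (T V : H →L[ℂ] H) : Prop :=
  V * star V * V = V ∧ LinearMap.ker (V : H →ₗ[ℂ] H) = LinearMap.ker (T : H →ₗ[ℂ] H) ∧ T = V * opAbs T

open Classical in
/-- The partial isometry of the polar decomposition of `T` (it exists and is unique). -/
def polarIsom (T : H →L[ℂ] H) : H →L[ℂ] H :=
  if h : ∃ V, IsPolarPartialIsom T V then h.choose else 0

/-- The `λ`-Aluthge transform `Δ_λ(T) = |T|^λ V |T|^(1-λ)`. -/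
def aluthge (l : ℝ) (T : H →L[ℂ] H) : H →L[ℂ] H :=
  CFC.rpow (opAbs T) l * polarIsom T * CFC.rpow (opAbs T) (1 - l)

/-- The Jordan product `A ∘ B = (AB + BA)/2`. -/
def jordan (A B : H →L[ℂ] H) : H →L[ℂ] H := (2⁻¹ : ℂ) • (A * B + B * A)

/-- The rank-one operator `x ⊗ y : u ↦ ⟨u, y⟩ x` (the inner product being linear
in its first slot, as in the paper). -/
def rankOne (x y : H) : H →L[ℂ] H := (innerSL ℂ y).smulRight x

/-- A quasi-normal operator: `T` commutes with `T*T`. -/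
def IsQuasinormal (T : H →L[ℂ] H) : Prop := T * (star T * T) = (star T * T) * T

end

set_option maxHeartbeats 2000000
set_option synthInstance.maxHeartbeats 2000000
set_option linter.unusedSectionVars false
set_option linter.unusedVariables false

noncomputable section AluthgeHelpers

variable {H : Type*} [NormedAddCommGroup H] [InnerProductSpace ℂ H] [CompleteSpace H]

lemma rankOne_apply' (x y z : H) : rankOne x y z = ⟪y, z⟫_ℂ • x := rfl

lemma star_rankOne' (x y : H) : star (rankOne x y) = rankOne y x := by
  rw [ContinuousLinearMap.star_eq_adjoint]
  symm
  rw [ContinuousLinearMap.eq_adjoint_iff]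
  intro u v
  simp only [rankOne_apply', inner_smul_left, inner_smul_right]
  rw [← inner_conj_symm u x]
  ring

lemma rankOne_comp_rankOne' (x y z w : H) :
    rankOne x y * rankOne z w = ⟪y, z⟫_ℂ • rankOne x w := by
  ext u
  simp only [ContinuousLinearMap.mul_apply, rankOne_apply', ContinuousLinearMap.smul_apply,
    inner_smul_right, smul_smul]
  ring_nf

lemma contOn' (s : ℝ) (hs : 0 ≤ s) (u : Set ℝ≥0) : ContinuousOn (fun x : ℝ≥0 => x ^ s) u :=
  (NNReal.continuous_rpow_const hs).continuousOn

lemma rpow_mul_rpow' (a : H →L[ℂ] H) {s t : ℝ} (hs : 0 < s) (ht : 0 < t) :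
    CFC.rpow a s * CFC.rpow a t = CFC.rpow a (s + t) := by
  have hdef : ∀ y : ℝ, CFC.rpow a y = cfc (fun x : ℝ≥0 => x ^ y) a := fun _ => rfl
  rw [hdef, hdef, hdef, ← cfc_mul _ _ a (contOn' s hs.le _) (contOn' t ht.le _)]
  apply cfc_congr
  intro z _
  exact (NNReal.rpow_add' (by positivity) z).symm

lemma rpow_two' (a : H →L[ℂ] H) (ha : 0 ≤ a) : CFC.rpow a 2 = a * a := by
  have h := CFC.rpow_natCast a 2 ha
  rw [show ((2:ℕ):ℝ) = (2:ℝ) by norm_num] at h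
  calc CFC.rpow a 2 = a ^ (2:ℕ) := h
  _ = a * a := sq a

lemma selfAdjoint_rpow' (a : H →L[ℂ] H) (θ : ℝ) : IsSelfAdjoint (CFC.rpow a θ) :=
  IsSelfAdjoint.of_nonneg CFC.rpow_nonneg

lemma selfadj_inner_move {B : H →L[ℂ] H} (hB : IsSelfAdjoint B) (u v : H) :
    ⟪B u, v⟫_ℂ = ⟪u, B v⟫_ℂ := by
  have h1 : ContinuousLinearMap.adjoint B = B := by
    rw [← ContinuousLinearMap.star_eq_adjoint]; exact hB
  calc ⟪B u, v⟫_ℂ = ⟪ContinuousLinearMap.adjoint B u, v⟫_ℂ := by rw [h1]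
  _ = ⟪u, B v⟫_ℂ := ContinuousLinearMap.adjoint_inner_left B v u

lemma inner_self_op' (B : H →L[ℂ] H) (hB : IsSelfAdjoint B) (z : H) :
    ⟪B z, B z⟫_ℂ = ⟪z, (B * B) z⟫_ℂ := by
  rw [selfadj_inner_move hB z (B z)]; rfl

lemma rpow_apply_ker (a : H →L[ℂ] H) (ha : 0 ≤ a) {z : H} (hz : a z = 0)
    {θ : ℝ} (hθ : 0 < θ) : CFC.rpow a θ z = 0 := by
  have key1 : ∀ s : ℝ, 1 ≤ s → CFC.rpow a s z = 0 := by
    intro s hs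
    have hone : CFC.rpow a 1 = a := CFC.rpow_one a ha
    rcases eq_or_lt_of_le hs with h1 | h1
    · rw [← h1, hone, hz]
    · have h2 : CFC.rpow a (s - 1) * CFC.rpow a 1 = CFC.rpow a s := by
        rw [rpow_mul_rpow' a (by linarith) one_pos]; norm_num
      rw [hone] at h2
      rw [← h2, ContinuousLinearMap.mul_apply, hz, map_zero]
  have key2 : ∀ s : ℝ, 0 < s → CFC.rpow a (2 * s) z = 0 → CFC.rpow a s z = 0 := by
    intro s hs h2s
    have hBB : CFC.rpow a s * CFC.rpow a s = CFC.rpow a (2 * s) := by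
      rw [rpow_mul_rpow' a hs hs]; ring_nf
    have := inner_self_op' (CFC.rpow a s) (selfAdjoint_rpow' a s) z
    rw [hBB, h2s] at this
    simpa [inner_self_eq_zero] using this
  obtain ⟨n, hn⟩ := exists_nat_gt (1 / θ)
  have hn2 : 1 ≤ 2 ^ n * θ := by
    have h1 : (n : ℝ) ≤ 2 ^ n := by
      exact_mod_cast (Nat.lt_two_pow_self (n := n)).le
    have h3 : 1 / θ < 2 ^ n := lt_of_lt_of_le hn h1
    rw [div_lt_iff₀ hθ] at h3
    nlinarith
  clear hn
  induction n generalizing θ with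
  | zero => exact key1 θ (by simpa using hn2)
  | succ n ih =>
      refine key2 θ hθ (ih (by positivity) ?_)
      rw [pow_succ] at hn2; nlinarith

lemma coord_two {x y : H} (hxx : ⟪x,x⟫_ℂ = 1) (hyy : ⟪y,y⟫_ℂ = 1) (hxy : ⟪x,y⟫_ℂ = 0)
    {B : H →L[ℂ] H} (hB : IsSelfAdjoint B)
    (hkill : ∀ z, ⟪x,z⟫_ℂ = 0 → ⟪y,z⟫_ℂ = 0 → B z = 0) (u : H) :
    B u = ⟪x, B u⟫_ℂ • x + ⟪y, B u⟫_ℂ • y := by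
  have hyx : ⟪y,x⟫_ℂ = 0 := by rw [← inner_conj_symm, hxy, map_zero]
  set ξ := B u with hξ
  set ξ' := ξ - ⟪x, ξ⟫_ℂ • x - ⟪y, ξ⟫_ℂ • y with hξ'
  have hξ'x : ⟪x, ξ'⟫_ℂ = 0 := by
    rw [hξ', inner_sub_right, inner_sub_right, inner_smul_right, inner_smul_right, hxx, hxy]
    ring
  have hξ'y : ⟪y, ξ'⟫_ℂ = 0 := by
    rw [hξ', inner_sub_right, inner_sub_right, inner_smul_right, inner_smul_right, hyy, hyx]
    ring
  have hBξ' : B ξ' = 0 := hkill ξ' hξ'x hξ'y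
  have hinner : ⟪ξ', ξ⟫_ℂ = 0 := by
    rw [hξ, ← selfadj_inner_move hB, hBξ', inner_zero_left]
  have hξ'x' : ⟪ξ', x⟫_ℂ = 0 := by rw [← inner_conj_symm, hξ'x, map_zero]
  have hξ'y' : ⟪ξ', y⟫_ℂ = 0 := by rw [← inner_conj_symm, hξ'y, map_zero]
  have hzero : ⟪ξ', ξ'⟫_ℂ = 0 := by
    rw [hξ', inner_sub_right, inner_sub_right, inner_smul_right, inner_smul_right,
      ← hξ', hinner, hξ'x', hξ'y']
    ring
  have hz0 : ξ' = 0 := inner_self_eq_zero.mp hzero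
  have h3 := hξ'.symm.trans hz0
  rw [sub_sub, sub_eq_zero] at h3
  exact h3

lemma span_pair_coord {x y : H} (hxx : ⟪x,x⟫_ℂ = 1) (hyy : ⟪y,y⟫_ℂ = 1) (hxy : ⟪x,y⟫_ℂ = 0)
    {w : H} (hw : w ∈ Submodule.span ℂ ({x, y} : Set H)) :
    w = ⟪x, w⟫_ℂ • x + ⟪y, w⟫_ℂ • y := by
  have hyx : ⟪y,x⟫_ℂ = 0 := by rw [← inner_conj_symm, hxy, map_zero]
  obtain ⟨p, q, hpq⟩ := Submodule.mem_span_pair.mp hw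
  have h1 : ⟪x, w⟫_ℂ = p := by
    rw [← hpq, inner_add_right, inner_smul_right, inner_smul_right, hxx, hxy]; ring
  have h2 : ⟪y, w⟫_ℂ = q := by
    rw [← hpq, inner_add_right, inner_smul_right, inner_smul_right, hyy, hyx]; ring
  rw [h1, h2, hpq]

lemma trace_swap {x y : H} (X Y : H →L[ℂ] H)
    (hXx : X x = ⟪x, X x⟫_ℂ • x + ⟪y, X x⟫_ℂ • y)
    (hXy : X y = ⟪x, X y⟫_ℂ • x + ⟪y, X y⟫_ℂ • y)
    (hYx : Y x = ⟪x, Y x⟫_ℂ • x + ⟪y, Y x⟫_ℂ • y)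
    (hYy : Y y = ⟪x, Y y⟫_ℂ • x + ⟪y, Y y⟫_ℂ • y) :
    ⟪x, X (Y x)⟫_ℂ + ⟪y, X (Y y)⟫_ℂ = ⟪x, Y (X x)⟫_ℂ + ⟪y, Y (X y)⟫_ℂ := by
  calc ⟪x, X (Y x)⟫_ℂ + ⟪y, X (Y y)⟫_ℂ
      = ⟪x, X (⟪x, Y x⟫_ℂ • x + ⟪y, Y x⟫_ℂ • y)⟫_ℂ
        + ⟪y, X (⟪x, Y y⟫_ℂ • x + ⟪y, Y y⟫_ℂ • y)⟫_ℂ := by rw [← hYx, ← hYy]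
  _ = ⟪x, Y x⟫_ℂ * ⟪x, X x⟫_ℂ + ⟪y, Y x⟫_ℂ * ⟪x, X y⟫_ℂ
      + (⟪x, Y y⟫_ℂ * ⟪y, X x⟫_ℂ + ⟪y, Y y⟫_ℂ * ⟪y, X y⟫_ℂ) := by
      simp only [map_add, map_smul, inner_add_right, inner_smul_right, smul_eq_mul]
  _ = ⟪x, X x⟫_ℂ * ⟪x, Y x⟫_ℂ + ⟪y, X x⟫_ℂ * ⟪x, Y y⟫_ℂ
      + (⟪x, X y⟫_ℂ * ⟪y, Y x⟫_ℂ + ⟪y, X y⟫_ℂ * ⟪y, Y y⟫_ℂ) := by ring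
  _ = ⟪x, Y (⟪x, X x⟫_ℂ • x + ⟪y, X x⟫_ℂ • y)⟫_ℂ
      + ⟪y, Y (⟪x, X y⟫_ℂ • x + ⟪y, X y⟫_ℂ • y)⟫_ℂ := by
      simp only [map_add, map_smul, inner_add_right, inner_smul_right, smul_eq_mul]
  _ = ⟪x, Y (X x)⟫_ℂ + ⟪y, Y (X y)⟫_ℂ := by rw [← hXx, ← hXy]

lemma aluthge_backward (l : ℝ) (hl : l ∈ Set.Ioo (0:ℝ) 1) (x : H) (hx : ‖x‖ = 1) (α : ℂ) :
    aluthge l (jordan (α • rankOne x x) (rankOne x x)) = α • rankOne x x := by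
  obtain ⟨hl0, hl1⟩ := hl
  set P : H →L[ℂ] H := rankOne x x with hPdef
  have hxx : ⟪x, x⟫_ℂ = 1 := by
    rw [inner_self_eq_norm_sq_to_K, hx]; norm_num
  have hPP : P * P = P := by rw [hPdef, rankOne_comp_rankOne', hxx, one_smul]
  have hstarP : star P = P := star_rankOne' x x
  have hPx : P x = x := by rw [hPdef, rankOne_apply', hxx, one_smul]
  have hT : jordan (α • P) P = α • P := by
    rw [jordan, smul_mul_assoc, mul_smul_comm, hPP]
    module
  rw [hT]
  rcases eq_or_ne α 0 with rfl | hα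
  · -- zero case
    simp only [zero_smul]
    have hEx : ∃ V, IsPolarPartialIsom (0 : H →L[ℂ] H) V :=
      ⟨0, by simp, rfl, by simp⟩
    have hP0 : polarIsom (0 : H →L[ℂ] H) = 0 := by
      rw [polarIsom, dif_pos hEx]
      have hker := hEx.choose_spec.2.1
      ext z
      have hz : z ∈ LinearMap.ker (hEx.choose : H →ₗ[ℂ] H) := by
        rw [hker]; exact LinearMap.mem_ker.mpr (by simp)
      simpa using LinearMap.mem_ker.mp hz
    rw [aluthge, hP0, mul_zero, zero_mul]
  · set c : ℂ := (‖α‖ : ℂ) with hcdef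
    have hc : c ≠ 0 := by
      simp [hcdef, norm_eq_zero, hα]
    have hαα : star α * α = c * c := by
      rw [Complex.star_def, ← Complex.normSq_eq_conj_mul_self, hcdef,
        Complex.normSq_eq_norm_sq]
      push_cast
      ring
    set T : H →L[ℂ] H := α • P with hTdef
    have hS : star T * T = (c * c) • P := by
      rw [hTdef, star_smul, hstarP, smul_mul_assoc, mul_smul_comm, hPP, smul_smul, hαα]
    have hPos : (0 : H →L[ℂ] H) ≤ c • P := by
      have hM : star (((Real.sqrt ‖α‖ : ℝ) : ℂ) • P) * (((Real.sqrt ‖α‖ : ℝ) : ℂ) • P)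
          = c • P := by
        rw [star_smul, hstarP, smul_mul_assoc, mul_smul_comm, hPP, smul_smul]
        congr 1
        rw [Complex.star_def, Complex.conj_ofReal, hcdef]
        rw [← Complex.ofReal_mul, Real.mul_self_sqrt (norm_nonneg α)]
      exact hM ▸ star_mul_self_nonneg _
    have hR : opAbs T = c • P := by
      rw [opAbs, hS]
      exact CFC.sqrt_unique (by
        rw [smul_mul_assoc, mul_smul_comm, hPP, smul_smul]) hPos
    set σ : ℂ := α / c with hσdef
    have hσc : σ * c = α := div_mul_cancel₀ α hc
    have hσ0 : σ ≠ 0 := div_ne_zero hα hc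
    have hσσ : σ * star σ * σ = σ := by
      have h1 : star σ * σ = 1 := by
        have h2 : star σ = star α / c := by
          rw [hσdef, star_div₀]
          congr 1
          rw [hcdef, Complex.star_def, Complex.conj_ofReal]
        rw [h2, hσdef]
        simp only [Complex.star_def]
        have hααc : (starRingEnd ℂ) α * α = c * c := by rw [← Complex.star_def]; exact hαα
        field_simp
        linear_combination hααc
      rw [mul_assoc, h1, mul_one]
    have hEx : ∃ V, IsPolarPartialIsom T V := by
      refine ⟨σ • P, ?_, ?_, ?_⟩
      · have hcomp : (σ • P) * star (σ • P) * (σ • P) = (σ * (star σ * σ)) • P := by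
          simp only [star_smul, hstarP, smul_mul_assoc, mul_smul_comm, hPP, smul_smul]
        rw [hcomp]
        congr 1
        linear_combination hσσ
      · ext z
        simp only [LinearMap.mem_ker, hTdef, ContinuousLinearMap.coe_coe, ContinuousLinearMap.smul_apply, smul_eq_zero,
          hσ0, hα, false_or]
      · rw [hR, smul_mul_assoc, mul_smul_comm, hPP, smul_smul, hσc]
    set W := hEx.choose with hWdef
    obtain ⟨hW1, hW2, hW3⟩ := hEx.choose_spec
    have hPI : polarIsom T = W := by rw [polarIsom, dif_pos hEx]
    have hWV : W = σ • P := by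
      ext u
      have hu'x : ⟪x, u - ⟪x, u⟫_ℂ • x⟫_ℂ = 0 := by
        rw [inner_sub_right, inner_smul_right, hxx]; ring
      have hu'T : T (u - ⟪x, u⟫_ℂ • x) = 0 := by
        rw [hTdef, ContinuousLinearMap.smul_apply, hPdef, rankOne_apply', hu'x,
          zero_smul, smul_zero]
      have hu'W : W (u - ⟪x, u⟫_ℂ • x) = 0 := by
        have : (u - ⟪x, u⟫_ℂ • x) ∈ LinearMap.ker (W : H →ₗ[ℂ] H) := by
          rw [hW2]; exact LinearMap.mem_ker.mpr hu'T
        exact LinearMap.mem_ker.mp this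
      have hWx : W x = σ • x := by
        have h1 : T (c⁻¹ • x) = σ • x := by
          rw [hTdef, ContinuousLinearMap.smul_apply, map_smul, hPx, smul_smul,
            ← div_eq_mul_inv, hσdef]
        have h2 : opAbs T (c⁻¹ • x) = x := by
          rw [hR, ContinuousLinearMap.smul_apply, map_smul, hPx, smul_smul,
            mul_inv_cancel₀ hc, one_smul]
        calc W x = W (opAbs T (c⁻¹ • x)) := by rw [h2]
        _ = (W * opAbs T) (c⁻¹ • x) := rfl
        _ = T (c⁻¹ • x) := by rw [← hW3]
        _ = σ • x := h1
      have hudec : u = ⟪x, u⟫_ℂ • x + (u - ⟪x, u⟫_ℂ • x) := by abel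
      calc W u = W (⟪x, u⟫_ℂ • x + (u - ⟪x, u⟫_ℂ • x)) := by rw [← hudec]
      _ = ⟪x, u⟫_ℂ • W x + W (u - ⟪x, u⟫_ℂ • x) := by rw [map_add, map_smul]
      _ = ⟪x, u⟫_ℂ • (σ • x) := by rw [hWx, hu'W, add_zero]
      _ = (σ • P) u := by
          rw [ContinuousLinearMap.smul_apply, hPdef, rankOne_apply', smul_smul, smul_smul,
            mul_comm]
    have hRpos : (0 : H →L[ℂ] H) ≤ opAbs T := hR ▸ hPos
    have hrpow1 : CFC.rpow (opAbs T) 1 = opAbs T := CFC.rpow_one _ hRpos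
    have key : CFC.rpow (opAbs T) l * opAbs T * CFC.rpow (opAbs T) (1 - l)
        = opAbs T * opAbs T := by
      have e1 : CFC.rpow (opAbs T) l * CFC.rpow (opAbs T) 1 * CFC.rpow (opAbs T) (1 - l)
          = CFC.rpow (opAbs T) 2 := by
        rw [rpow_mul_rpow' _ hl0 one_pos, rpow_mul_rpow' _ (by linarith) (by linarith),
          show l + 1 + (1 - l) = (2:ℝ) by ring]
      calc CFC.rpow (opAbs T) l * opAbs T * CFC.rpow (opAbs T) (1 - l)
          = CFC.rpow (opAbs T) l * CFC.rpow (opAbs T) 1 * CFC.rpow (opAbs T) (1 - l) := by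
            rw [hrpow1]
      _ = CFC.rpow (opAbs T) 2 := e1
      _ = opAbs T * opAbs T := rpow_two' _ hRpos
    have hWR : (σ • P : H →L[ℂ] H) = (σ * c⁻¹) • opAbs T := by
      rw [hR, smul_smul, mul_assoc, inv_mul_cancel₀ hc, mul_one]
    rw [aluthge, hPI, hWV, hWR, mul_smul_comm, smul_mul_assoc, key, hR, smul_mul_assoc,
      mul_smul_comm, hPP, smul_smul, smul_smul, hTdef]
    congr 1
    field_simp
    linear_combination hσc

end AluthgeHelpers
noncomputable section Forward

variable {H : Type*} [NormedAddCommGroup H] [InnerProductSpace ℂ H] [CompleteSpace H]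

lemma aluthge_forward (l : ℝ) (hl : l ∈ Set.Ioo (0:ℝ) 1) (A : H →L[ℂ] H) (x : H)
    (hx : ‖x‖ = 1) (h : aluthge l (jordan A (rankOne x x)) = A) :
    ∃ α : ℂ, A = α • rankOne x x := by
  obtain ⟨hl0, hl1⟩ := hl
  have hl1' : 0 < 1 - l := by linarith
  set P : H →L[ℂ] H := rankOne x x with hPdef
  have hxx : ⟪x, x⟫_ℂ = 1 := by
    rw [inner_self_eq_norm_sq_to_K, hx]; norm_num
  set T : H →L[ℂ] H := jordan A P with hTdef
  by_cases hEx : ∃ V, IsPolarPartialIsom T V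
  case neg =>
    have h0 : polarIsom T = 0 := by rw [polarIsom, dif_neg hEx]
    rw [aluthge, h0, mul_zero, zero_mul] at h
    exact ⟨0, by rw [← h, zero_smul]⟩
  case pos =>
  have hspec := hEx.choose_spec
  have hPI : polarIsom T = hEx.choose := by rw [polarIsom, dif_pos hEx]
  set V : H →L[ℂ] H := hEx.choose with hVdef
  obtain ⟨hV1, hV2, hV3⟩ := hspec
  rw [aluthge, hPI] at h
  set R : H →L[ℂ] H := opAbs T with hRdef
  set X : H →L[ℂ] H := CFC.rpow R l with hXdef
  set Z : H →L[ℂ] H := CFC.rpow R (1 - l) with hZdef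
  set Y : H →L[ℂ] H := V * Z with hYdef
  have hA : A = X * Y := by rw [← h, hYdef, mul_assoc]
  have hRpos : (0:H→L[ℂ]H) ≤ R := by rw [hRdef, opAbs]; exact CFC.sqrt_nonneg _
  have hRsa : IsSelfAdjoint R := IsSelfAdjoint.of_nonneg hRpos
  have hXsa : IsSelfAdjoint X := selfAdjoint_rpow' R l
  have hZsa : IsSelfAdjoint Z := selfAdjoint_rpow' R (1-l)
  have hRR : R * R = star T * T := by
    rw [hRdef, opAbs]; exact CFC.sqrt_mul_sqrt_self _ (star_mul_self_nonneg T)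
  have hYX : Y * X = T := by
    have hone : CFC.rpow R 1 = R := CFC.rpow_one R hRpos
    rw [hYdef, hXdef, hZdef, mul_assoc, rpow_mul_rpow' R hl1' hl0,
      show (1 - l) + l = (1:ℝ) by ring, hone]
    exact hV3.symm
  -- kernels
  have hinnerT : ∀ z, ⟪T z, T z⟫_ℂ = ⟪R z, R z⟫_ℂ := by
    intro z
    have h1 : ⟪T z, T z⟫_ℂ = ⟪(star T * T) z, z⟫_ℂ := by
      rw [ContinuousLinearMap.mul_apply, ContinuousLinearMap.star_eq_adjoint]
      exact (ContinuousLinearMap.adjoint_inner_left T z (T z)).symm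
    have h2 : ⟪R z, R z⟫_ℂ = ⟪(star T * T) z, z⟫_ℂ := by
      rw [← hRR, ContinuousLinearMap.mul_apply]
      exact (selfadj_inner_move hRsa (R z) z).symm
    rw [h1, h2]
  have hkerTR : ∀ z, T z = 0 → R z = 0 := by
    intro z hz
    have := hinnerT z
    rw [hz] at this
    simp only [inner_zero_left] at this
    exact inner_self_eq_zero.mp this.symm
  have hkerX : ∀ z, T z = 0 → X z = 0 := fun z hz =>
    rpow_apply_ker R hRpos (hkerTR z hz) hl0
  have hkerZ : ∀ z, T z = 0 → Z z = 0 := fun z hz =>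
    rpow_apply_ker R hRpos (hkerTR z hz) hl1'
  have hkerA : ∀ z, T z = 0 → A z = 0 := by
    intro z hz
    rw [hA, ContinuousLinearMap.mul_apply, hYdef, ContinuousLinearMap.mul_apply,
      hkerZ z hz, map_zero, map_zero]
  have hAstar : star A = Z * (star V * X) := by
    rw [hA, hYdef, star_mul, star_mul, hXsa.star_eq, hZsa.star_eq, mul_assoc]
  have hkerAstar : ∀ z, T z = 0 → star A z = 0 := by
    intro z hz
    rw [hAstar, ContinuousLinearMap.mul_apply, ContinuousLinearMap.mul_apply,
      hkerX z hz, map_zero, map_zero]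
  -- T applied
  have hTapp : ∀ z, T z = (2⁻¹ * ⟪x, z⟫_ℂ) • A x + (2⁻¹ * ⟪x, A z⟫_ℂ) • x := by
    intro z
    rw [hTdef, jordan]
    simp only [ContinuousLinearMap.smul_apply, ContinuousLinearMap.add_apply,
      ContinuousLinearMap.mul_apply, hPdef, rankOne_apply', map_smul, smul_add, smul_smul]
  have hAdj : ∀ z, ⟪x, A z⟫_ℂ = ⟪star A x, z⟫_ℂ := by
    intro z
    rw [ContinuousLinearMap.star_eq_adjoint]
    exact (ContinuousLinearMap.adjoint_inner_left A z x).symm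
  by_cases hw : star A x - ⟪x, star A x⟫_ℂ • x = 0
  · -- Case I : star A x is a multiple of x
    have hsAx : star A x = ⟪x, star A x⟫_ℂ • x := by rwa [sub_eq_zero] at hw
    have hperp : ∀ z, ⟪x, z⟫_ℂ = 0 → T z = 0 := by
      intro z hz
      have h2 : ⟪x, A z⟫_ℂ = 0 := by
        rw [hAdj z, hsAx, inner_smul_left, hz, mul_zero]
      rw [hTapp z, hz, h2]
      simp
    have hAx : A x = ⟪x, A x⟫_ℂ • x := by
      have hXAx : A x = X (Y x) := by rw [hA]; rfl
      set ξ' := A x - ⟪x, A x⟫_ℂ • x with hξ'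
      have hξ'x : ⟪x, ξ'⟫_ℂ = 0 := by
        rw [hξ', inner_sub_right, inner_smul_right, hxx]; ring
      have hXξ' : X ξ' = 0 := hkerX ξ' (hperp ξ' hξ'x)
      have hinner : ⟪ξ', A x⟫_ℂ = 0 := by
        rw [hXAx, ← selfadj_inner_move hXsa, hXξ', inner_zero_left]
      have hξ'x' : ⟪ξ', x⟫_ℂ = 0 := by rw [← inner_conj_symm, hξ'x, map_zero]
      have hzero : ⟪ξ', ξ'⟫_ℂ = 0 := by
        rw [hξ', inner_sub_right, inner_smul_right, ← hξ', hinner, hξ'x']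
        ring
      have hz0 : ξ' = 0 := inner_self_eq_zero.mp hzero
      rw [hξ', sub_eq_zero] at hz0
      exact hz0
    obtain ⟨α₀, hα₀⟩ : ∃ v : ℂ, ⟪x, A x⟫_ℂ = v := ⟨_, rfl⟩
    rw [hα₀] at hAx
    refine ⟨α₀, ?_⟩
    ext z
    have hz' : ⟪x, z - ⟪x,z⟫_ℂ • x⟫_ℂ = 0 := by
      rw [inner_sub_right, inner_smul_right, hxx]; ring
    have hAz' : A (z - ⟪x,z⟫_ℂ • x) = 0 := hkerA _ (hperp _ hz')
    have hdec : A z = ⟪x, z⟫_ℂ • A x := by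
      have h5 := map_sub A z (⟪x,z⟫_ℂ • x)
      rw [hAz', map_smul] at h5
      exact (sub_eq_zero.mp h5.symm)
    rw [ContinuousLinearMap.smul_apply, hPdef, rankOne_apply', hdec, hAx, smul_smul, smul_smul]
    congr 1
    ring
  · -- Case II
    set w₀ : H := star A x - ⟪x, star A x⟫_ℂ • x with hw₀def
    have hww : w₀ ≠ 0 := hw
    clear_value w₀
    have hn0 : (‖w₀‖:ℝ) ≠ 0 := norm_ne_zero_iff.mpr hww
    have hnw₀ : ((‖w₀‖:ℝ):ℂ) ≠ 0 := Complex.ofReal_ne_zero.mpr hn0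
    set b : ℂ := ((‖w₀‖:ℝ):ℂ) with hbdef
    clear_value b
    have hb0 : b ≠ 0 := hnw₀
    set y : H := (((‖w₀‖⁻¹ : ℝ)):ℂ) • w₀ with hydef
    clear_value y
    have hxw₀ : ⟪x, w₀⟫_ℂ = 0 := by
      rw [hw₀def, inner_sub_right, inner_smul_right, hxx]; ring
    have hxy : ⟪x, y⟫_ℂ = 0 := by rw [hydef, inner_smul_right, hxw₀, mul_zero]
    have hyx : ⟪y, x⟫_ℂ = 0 := by rw [← inner_conj_symm, hxy, map_zero]
    have hw₀w₀ : ⟪w₀, w₀⟫_ℂ = ((‖w₀‖:ℝ):ℂ)^2 := inner_self_eq_norm_sq_to_K w₀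
    have hyy : ⟪y, y⟫_ℂ = 1 := by
      rw [hydef, inner_smul_left, inner_smul_right, hw₀w₀, Complex.conj_ofReal]
      have h7 : ((‖w₀‖:ℝ):ℂ) ≠ 0 := Complex.ofReal_ne_zero.mpr hn0
      push_cast
      field_simp
    have hsAx : star A x = ⟪x, star A x⟫_ℂ • x + b • y := by
      rw [hydef, smul_smul, hbdef]
      rw [show ((‖w₀‖:ℝ):ℂ) * ((‖w₀‖⁻¹:ℝ):ℂ) = 1 by
        push_cast
        exact mul_inv_cancel₀ (Complex.ofReal_ne_zero.mpr hn0)]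
      rw [one_smul, hw₀def]
      abel
    have hperp2 : ∀ z, ⟪x,z⟫_ℂ = 0 → ⟪y,z⟫_ℂ = 0 → T z = 0 := by
      intro z h1 h2
      have h3 : ⟪x, A z⟫_ℂ = 0 := by
        rw [hAdj z, hsAx, inner_add_left, inner_smul_left, inner_smul_left, h1, h2]
        ring
      rw [hTapp z, h1, h3]
      simp
    have hkill : ∀ z, ⟪x,z⟫_ℂ = 0 → ⟪y,z⟫_ℂ = 0 → X z = 0 := fun z h1 h2 =>
      hkerX z (hperp2 z h1 h2)
    have hXcoord : ∀ u, X u = ⟪x, X u⟫_ℂ • x + ⟪y, X u⟫_ℂ • y :=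
      coord_two hxx hyy hxy hXsa hkill
    have hAcoord : ∀ u, A u = ⟪x, A u⟫_ℂ • x + ⟪y, A u⟫_ℂ • y := by
      intro u
      have h1 : A u = X (Y u) := by rw [hA]; rfl
      rw [h1]
      exact hXcoord (Y u)
    -- the span N
    set N : Submodule ℂ H := Submodule.span ℂ ({x, y} : Set H) with hNdef
    have hxN : x ∈ N := Submodule.subset_span (by simp)
    have hyN : y ∈ N := Submodule.subset_span (by simp)
    have hNfd : FiniteDimensional ℂ N := by
      rw [hNdef]
      exact FiniteDimensional.span_of_finite ℂ (Set.toFinite _)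
    have hNclosed : IsClosed (N : Set H) := Submodule.closed_of_finiteDimensional N
    have hAmem : ∀ u, A u ∈ N := fun u => by
      rw [hAcoord u]
      exact N.add_mem (N.smul_mem _ hxN) (N.smul_mem _ hyN)
    have hTN : ∀ u, T u ∈ N := fun u => by
      rw [hTapp u]
      exact N.add_mem (N.smul_mem _ (hAmem x)) (N.smul_mem _ hxN)
    -- Z values lie in the closure of the range of R
    have hZclos : ∀ u, Z u ∈ closure ((LinearMap.range (R : H →ₗ[ℂ] H) : Submodule ℂ H) : Set H) := by
      intro u
      have hker_eq : (LinearMap.ker (R : H →ₗ[ℂ] H) : Submodule ℂ H) = (LinearMap.range (R : H →ₗ[ℂ] H))ᗮ := by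
        ext v
        rw [Submodule.mem_orthogonal]
        constructor
        · intro hv u' hu'
          obtain ⟨w, rfl⟩ := LinearMap.mem_range.mp hu'
          rw [ContinuousLinearMap.coe_coe, selfadj_inner_move hRsa, @id (R v = 0) (LinearMap.mem_ker.mp hv), inner_zero_right]
        · intro hv
          rw [LinearMap.mem_ker]
          have h6 : ⟪R (R v), v⟫_ℂ = 0 := hv (R (R v)) (LinearMap.mem_range.mpr ⟨R v, rfl⟩)
          rw [selfadj_inner_move hRsa (R v) v] at h6
          exact inner_self_eq_zero.mp h6
      have h2 : (LinearMap.ker (R : H →ₗ[ℂ] H) : Submodule ℂ H)ᗮ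
          = (LinearMap.range (R : H →ₗ[ℂ] H) : Submodule ℂ H).topologicalClosure := by
        rw [hker_eq, Submodule.orthogonal_orthogonal_eq_closure]
      have hZker : Z u ∈ (LinearMap.ker (R : H →ₗ[ℂ] H) : Submodule ℂ H)ᗮ := by
        rw [Submodule.mem_orthogonal]
        intro v hv
        have hRv : R v = 0 := LinearMap.mem_ker.mp hv
        have hZv : Z v = 0 := rpow_apply_ker R hRpos hRv hl1'
        rw [← selfadj_inner_move hZsa v u, hZv, inner_zero_left]
      rw [h2] at hZker
      rw [← Submodule.topologicalClosure_coe]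
      exact hZker
    -- V-related values lie in N
    have hYmem : ∀ u, Y u ∈ N := by
      intro u
      have h1 : Y u = V (Z u) := rfl
      have h2 : V '' ((LinearMap.range (R : H →ₗ[ℂ] H) : Submodule ℂ H) : Set H) ⊆ (N : Set H) := by
        rintro w' ⟨w'', hw'', rfl⟩
        obtain ⟨w, rfl⟩ := LinearMap.mem_range.mp hw''
        have h5 : V (R w) = T w := by
          rw [show V (R w) = (V * R) w from rfl, ← hV3]
        rw [ContinuousLinearMap.coe_coe, h5]
        exact hTN w
      have h3 : V (Z u) ∈ closure (V '' ((LinearMap.range (R : H →ₗ[ℂ] H) : Submodule ℂ H) : Set H)) :=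
        image_closure_subset_closure_image V.continuous ⟨Z u, hZclos u, rfl⟩
      have h4 : closure (V '' ((LinearMap.range (R : H →ₗ[ℂ] H) : Submodule ℂ H) : Set H)) ⊆ (N : Set H) :=
        closure_minimal h2 hNclosed
      rw [h1]
      exact h4 h3
    have hYx : Y x = ⟪x, Y x⟫_ℂ • x + ⟪y, Y x⟫_ℂ • y :=
      span_pair_coord hxx hyy hxy (hYmem x)
    have hYy : Y y = ⟪x, Y y⟫_ℂ • x + ⟪y, Y y⟫_ℂ • y :=
      span_pair_coord hxx hyy hxy (hYmem y)
    set Y₂ : H →L[ℂ] H := T * Y with hY₂def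
    have hY₂mem : ∀ u, Y₂ u ∈ N := fun u => hTN (Y u)
    have hY₂x : Y₂ x = ⟪x, Y₂ x⟫_ℂ • x + ⟪y, Y₂ x⟫_ℂ • y :=
      span_pair_coord hxx hyy hxy (hY₂mem x)
    have hY₂y : Y₂ y = ⟪x, Y₂ y⟫_ℂ • x + ⟪y, Y₂ y⟫_ℂ • y :=
      span_pair_coord hxx hyy hxy (hY₂mem y)
    -- matrix entries
    obtain ⟨a, ha⟩ : ∃ v : ℂ, ⟪x, A x⟫_ℂ = v := ⟨_, rfl⟩
    obtain ⟨c, hc⟩ : ∃ v : ℂ, ⟪y, A x⟫_ℂ = v := ⟨_, rfl⟩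
    obtain ⟨d, hd⟩ : ∃ v : ℂ, ⟪y, A y⟫_ℂ = v := ⟨_, rfl⟩
    have hbAy : ⟪x, A y⟫_ℂ = b := by
      rw [hAdj y, hsAx, inner_add_left, inner_smul_left, inner_smul_left, hxy, hyy,
        hbdef, Complex.conj_ofReal]
      ring
    have hAx2 : A x = a • x + c • y := by rw [← ha, ← hc]; exact hAcoord x
    have hAy2 : A y = b • x + d • y := by rw [← hbAy, ← hd]; exact hAcoord y
    -- T entries
    have hTx : T x = a • x + (2⁻¹ * c) • y := by
      rw [hTapp x, hxx, ha, hAx2]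
      module
    have hTy : T y = (2⁻¹ * b) • x := by
      rw [hTapp y, hxy, hbAy]
      module
    have hxTx : ⟪x, T x⟫_ℂ = a := by
      rw [hTx, inner_add_right, inner_smul_right, inner_smul_right, hxx, hxy]; ring
    have hyTx : ⟪y, T x⟫_ℂ = 2⁻¹ * c := by
      rw [hTx, inner_add_right, inner_smul_right, inner_smul_right, hyx, hyy]; ring
    have hxTy : ⟪x, T y⟫_ℂ = 2⁻¹ * b := by
      rw [hTy, inner_smul_right, hxx]; ring
    have hyTy : ⟪y, T y⟫_ℂ = 0 := by
      rw [hTy, inner_smul_right, hyx]; ring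
    -- first trace identity
    have hE1 := trace_swap X Y (hXcoord x) (hXcoord y) hYx hYy
    have hXYz : ∀ u, X (Y u) = A u := fun u => by rw [hA]; rfl
    have hYXz : ∀ u, Y (X u) = T u := fun u => by rw [← hYX]; rfl
    rw [hXYz, hXYz, hYXz, hYXz, ha, hd, hxTx, hyTy] at hE1
    have hd0 : d = 0 := by linear_combination hE1
    -- second trace identity
    have hAA : X * Y₂ = A * A := by
      rw [hY₂def, hA, ← hYX]
      simp only [mul_assoc]
    have hTT : Y₂ * X = T * T := by rw [hY₂def, mul_assoc, hYX]
    have hE2 := trace_swap X Y₂ (hXcoord x) (hXcoord y) hY₂x hY₂y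
    have hXY₂z : ∀ u, X (Y₂ u) = (A * A) u := fun u => by rw [← hAA]; rfl
    have hY₂Xz : ∀ u, Y₂ (X u) = (T * T) u := fun u => by rw [← hTT]; rfl
    rw [hXY₂z, hXY₂z, hY₂Xz, hY₂Xz] at hE2
    have hAAx : ⟪x, (A * A) x⟫_ℂ = a * a + c * b := by
      rw [show (A * A) x = A (A x) from rfl, hAx2, map_add, map_smul, map_smul, hAx2, hAy2,
        inner_add_right, inner_smul_right, inner_smul_right, inner_add_right, inner_add_right,
        inner_smul_right, inner_smul_right, inner_smul_right, inner_smul_right,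
        hxx, hxy]
      ring
    have hAAy : ⟪y, (A * A) y⟫_ℂ = b * c + d * d := by
      rw [show (A * A) y = A (A y) from rfl, hAy2, map_add, map_smul, map_smul, hAx2, hAy2,
        inner_add_right, inner_smul_right, inner_smul_right, inner_add_right, inner_add_right,
        inner_smul_right, inner_smul_right, inner_smul_right, inner_smul_right,
        hyx, hyy]
      ring
    have hTTx : ⟪x, (T * T) x⟫_ℂ = a * a + (2⁻¹ * c) * (2⁻¹ * b) := by
      rw [show (T * T) x = T (T x) from rfl, hTx, map_add, map_smul, map_smul,
        inner_add_right, inner_smul_right, inner_smul_right, hxTx, hxTy]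
    have hTTy : ⟪y, (T * T) y⟫_ℂ = (2⁻¹ * b) * (2⁻¹ * c) := by
      rw [show (T * T) y = T (T y) from rfl, hTy, map_smul, inner_smul_right, hyTx]
    rw [hAAx, hAAy, hTTx, hTTy] at hE2
    have hbc : c * b = 0 := by
      linear_combination (2/3 : ℂ) * hE2 - (2/3 : ℂ) * d * hd0
    have hc0 : c = 0 := (mul_eq_zero.mp hbc).resolve_right hb0
    -- the kernel vector
    set z₀ : H := (-(2⁻¹ * b)) • x + a • y with hz₀def
    clear_value z₀
    have hTz₀ : T z₀ = 0 := by
      rw [hz₀def, map_add, map_smul, map_smul, hTx, hTy, hc0]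
      module
    have hAsz₀ : star A z₀ = 0 := hkerAstar z₀ hTz₀
    have hfinal : ⟪z₀, A y⟫_ℂ = 0 := by
      rw [← ContinuousLinearMap.adjoint_inner_left A y z₀, ← ContinuousLinearMap.star_eq_adjoint,
        hAsz₀, inner_zero_left]
    have hfinal2 : ⟪z₀, A y⟫_ℂ = -(2⁻¹ * b * (starRingEnd ℂ) b) := by
      rw [hz₀def, inner_add_left, inner_smul_left, inner_smul_left, hbAy, hd, hd0]
      simp only [map_neg, map_mul]
      rw [show (starRingEnd ℂ) (2⁻¹ : ℂ) = 2⁻¹ by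
        rw [map_inv₀, Complex.conj_ofNat]]
      ring
    rw [hfinal] at hfinal2
    exfalso
    have hbb : b * (starRingEnd ℂ) b = 0 := by linear_combination (2 : ℂ) * hfinal2
    rcases mul_eq_zero.mp hbb with h9 | h9
    · exact hb0 h9
    · refine hb0 ?_
      have h10 := congrArg (starRingEnd ℂ) h9
      simpa using h10

end Forward

variable {H K : Type*} [NormedAddCommGroup H] [InnerProductSpace ℂ H] [CompleteSpace H]
  [NormedAddCommGroup K] [InnerProductSpace ℂ K] [CompleteSpace K]

theorem aluthge_jordan_rankOneProj_eq_self_iff (l : ℝ) (hl : l ∈ Set.Ioo (0 : ℝ) 1)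
    (A : H →L[ℂ] H) (x : H) (hx : ‖x‖ = 1) :
    aluthge l (jordan A (rankOne x x)) = A ↔ ∃ α : ℂ, A = α • rankOne x x := by
  constructor
  · exact fun h => aluthge_forward l hl A x hx h
  · rintro ⟨α, rfl⟩
    exact aluthge_backward l hl x hx α
end

section
/- Let H be a complex Hilbert space, λ ∈ (0,1), and S ∈ B(H) a quasi-normal operator. If Δ_λ(S*) = S, then S = S*. -/
open scoped NNReal InnerProductSpace ComplexConjugate

variable {H K : Type*} [NormedAddCommGroup H] [InnerProductSpace ℂ H] [CompleteSpace H]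
  [NormedAddCommGroup K] [InnerProductSpace ℂ K] [CompleteSpace K]

set_option synthInstance.maxHeartbeats 400000
set_option maxHeartbeats 1600000

open scoped ContinuousFunctionalCalculus

open Polynomial in
/-- If `b` commutes with a selfadjoint `a`, then `b` commutes with `cfc f a`. -/
private lemma aux_commute_cfc_real (b a : H →L[ℂ] H) (ha : IsSelfAdjoint a)
    (hab : Commute b a) (f : ℝ → ℝ) : Commute b (cfc f a) := by
  by_cases hf : ContinuousOn f (spectrum ℝ a)
  · rw [cfc_apply f a ha hf]
    suffices hall : ∀ g : C(spectrum ℝ a, ℝ), Commute b (cfcHom ha g) from hall _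
    intro g
    have hcont : Continuous (cfcHom ha (R := ℝ)) := cfcHom_continuous ha
    have hclosed : IsClosed {g : C(spectrum ℝ a, ℝ) | Commute b (cfcHom ha g)} := by
      have hset : {g : C(spectrum ℝ a, ℝ) | Commute b (cfcHom ha g)}
          = (fun g : C(spectrum ℝ a, ℝ) => b * cfcHom ha g - cfcHom ha g * b) ⁻¹' {0} := by
        ext g
        simp only [Set.mem_setOf_eq, Set.mem_preimage, Set.mem_singleton_iff, sub_eq_zero]
        exact ⟨fun h => h.eq, fun h => h⟩
      rw [hset]
      exact IsClosed.preimage ((continuous_const.mul hcont).sub (hcont.mul continuous_const))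
        isClosed_singleton
    have hsub : (polynomialFunctions (spectrum ℝ a) : Set C(spectrum ℝ a, ℝ))
        ⊆ {g : C(spectrum ℝ a, ℝ) | Commute b (cfcHom ha g)} := by
      rintro g' hg'
      rw [SetLike.mem_coe, polynomialFunctions, Subalgebra.mem_map] at hg'
      obtain ⟨p, -, rfl⟩ := hg'
      have hψ : cfcHom ha (Polynomial.toContinuousMapOnAlgHom (spectrum ℝ a) p) = aeval a p := by
        have hX : ((cfcHom ha).toAlgHom.comp
            (Polynomial.toContinuousMapOnAlgHom (spectrum ℝ a))) X = a := by
          have h1 : Polynomial.toContinuousMapOnAlgHom (spectrum ℝ a) (X : ℝ[X])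
              = (ContinuousMap.id ℝ).restrict (spectrum ℝ a) := by
            ext x; simp
          simp only [AlgHom.coe_comp, Function.comp_apply, h1]
          exact cfcHom_id ha
        calc cfcHom ha (Polynomial.toContinuousMapOnAlgHom (spectrum ℝ a) p)
            = ((cfcHom ha).toAlgHom.comp
                (Polynomial.toContinuousMapOnAlgHom (spectrum ℝ a))) p := rfl
          _ = aeval a p := by
              conv_rhs => rw [← hX]
              rw [aeval_algHom_apply, aeval_X_left_apply]
      show Commute b _
      rw [hψ]
      clear hψ
      induction p using Polynomial.induction_on' with
      | add p q hp hq => rw [map_add]; exact hp.add_right hq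
      | monomial n r =>
          rw [aeval_monomial]
          exact (Commute.mul_right (Algebra.commute_algebraMap_right _ _) (hab.pow_right n))
    have hg : g ∈ closure (polynomialFunctions (spectrum ℝ a) : Set C(spectrum ℝ a, ℝ)) := by
      have htop := polynomialFunctions.topologicalClosure (spectrum ℝ a)
      have : g ∈ (polynomialFunctions (spectrum ℝ a)).topologicalClosure := by
        rw [htop]; trivial
      exact this
    exact (hclosed.closure_subset_iff.mpr hsub) hg
  · rw [cfc_apply_of_not_continuousOn a hf]
    exact Commute.zero_right b

private lemma aux_commute_cfc_nnreal (b a : H →L[ℂ] H) (ha : (0 : H →L[ℂ] H) ≤ a)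
    (hab : Commute b a) (f : ℝ≥0 → ℝ≥0) : Commute b (cfc f a) := by
  rw [cfc_nnreal_eq_real f a ha]
  exact aux_commute_cfc_real b a (.of_nonneg ha) hab _

private lemma aux_rpow_sqrt_eq_cfc (N : H →L[ℂ] H) {μ : ℝ} (hμ : 0 < μ) :
    CFC.rpow (CFC.sqrt N) μ = cfc (fun x : ℝ≥0 => NNReal.nnrpow x (2⁻¹ * μ.toNNReal)) N := by
  have hμ' : (0 : ℝ≥0) < μ.toNNReal := Real.toNNReal_pos.mpr hμ
  have h1 : CFC.rpow (CFC.sqrt N) μ = CFC.nnrpow (CFC.sqrt N) μ.toNNReal := by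
    have h := CFC.nnrpow_eq_rpow (a := CFC.sqrt N) (x := μ.toNNReal) hμ'
    rw [Real.coe_toNNReal μ hμ.le] at h
    rw [CFC.rpow_eq_pow, CFC.nnrpow_eq_pow]
    exact h.symm
  rw [h1]
  have h2 : CFC.nnrpow (CFC.sqrt N) μ.toNNReal = CFC.nnrpow N (2⁻¹ * μ.toNNReal) := by
    rw [CFC.nnrpow_eq_pow, CFC.nnrpow_eq_pow, CFC.sqrt_eq_nnrpow (a := N), CFC.nnrpow_nnrpow]
    norm_num
  rw [h2, CFC.nnrpow_eq_pow, CFC.nnrpow_def]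
  exact cfcₙ_eq_cfc

/-- rpow addition for nonneg operators with positive exponents. -/
private lemma aux_rpow_add (A : H →L[ℂ] H) (hA : (0 : H →L[ℂ] H) ≤ A) {x y : ℝ}
    (hx : 0 < x) (hy : 0 < y) :
    CFC.rpow A x * CFC.rpow A y = CFC.rpow A (x + y) := by
  have hx' : (0 : ℝ≥0) < x.toNNReal := Real.toNNReal_pos.mpr hx
  have hy' : (0 : ℝ≥0) < y.toNNReal := Real.toNNReal_pos.mpr hy
  have ex : CFC.rpow A x = CFC.nnrpow A x.toNNReal := by
    have h := CFC.nnrpow_eq_rpow (a := A) (x := x.toNNReal) hx'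
    rw [Real.coe_toNNReal x hx.le] at h
    rw [CFC.rpow_eq_pow, CFC.nnrpow_eq_pow]; exact h.symm
  have ey : CFC.rpow A y = CFC.nnrpow A y.toNNReal := by
    have h := CFC.nnrpow_eq_rpow (a := A) (x := y.toNNReal) hy'
    rw [Real.coe_toNNReal y hy.le] at h
    rw [CFC.rpow_eq_pow, CFC.nnrpow_eq_pow]; exact h.symm
  have exy : CFC.rpow A (x + y) = CFC.nnrpow A (x.toNNReal + y.toNNReal) := by
    have h := CFC.nnrpow_eq_rpow (a := A) (x := x.toNNReal + y.toNNReal) (by positivity)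
    rw [NNReal.coe_add, Real.coe_toNNReal x hx.le, Real.coe_toNNReal y hy.le] at h
    rw [CFC.rpow_eq_pow, CFC.nnrpow_eq_pow]; exact h.symm
  rw [ex, ey, exy]
  rw [CFC.nnrpow_eq_pow, CFC.nnrpow_eq_pow, CFC.nnrpow_eq_pow, CFC.nnrpow_add hx' hy']

/-- A selfadjoint operator `B` with `B (B x) = 0` satisfies `B x = 0`. -/
private lemma aux_apply_eq_zero_of_sq_apply (B : H →L[ℂ] H) (hB : IsSelfAdjoint B) {x : H}
    (h : B (B x) = 0) : B x = 0 := by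
  have hadj : ContinuousLinearMap.adjoint B = B := by
    rw [← ContinuousLinearMap.star_eq_adjoint]; exact hB
  have key : ⟪B x, B x⟫_ℂ = 0 := by
    have h2 := ContinuousLinearMap.adjoint_inner_left B x (B x)
    rw [hadj, h] at h2
    rw [← h2, inner_zero_left]
  exact inner_self_eq_zero.mp key

/-- Vectors killed by `A` are killed by positive real powers of `A`. -/
private lemma aux_rpow_apply_eq_zero (A : H →L[ℂ] H) (hA : (0 : H →L[ℂ] H) ≤ A) {x : H}
    (hx : A x = 0) : ∀ μ : ℝ, 0 < μ → CFC.rpow A μ x = 0 := by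
  have e1 : CFC.rpow A 1 = A := CFC.rpow_one A hA
  have hone : ∀ μ : ℝ, 1 ≤ μ → CFC.rpow A μ x = 0 := by
    intro μ hμ
    rcases eq_or_lt_of_le hμ with rfl | hμ'
    · rw [e1]; exact hx
    · have e : CFC.rpow A μ = CFC.rpow A (μ - 1) * CFC.rpow A 1 := by
        rw [aux_rpow_add A hA (by linarith : (0:ℝ) < μ - 1) one_pos]
        norm_num
      rw [e, e1, ContinuousLinearMap.mul_apply, hx, map_zero]
  have hhalf : ∀ μ : ℝ, 0 < μ → CFC.rpow A (2 * μ) x = 0 → CFC.rpow A μ x = 0 := by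
    intro μ hμ h2
    apply aux_apply_eq_zero_of_sq_apply (CFC.rpow A μ)
      (IsSelfAdjoint.of_nonneg (CFC.rpow_nonneg : (0 : H →L[ℂ] H) ≤ CFC.rpow A μ))
    have e : CFC.rpow A μ * CFC.rpow A μ = CFC.rpow A (2 * μ) := by
      rw [aux_rpow_add A hA hμ hμ]; ring_nf
    calc CFC.rpow A μ (CFC.rpow A μ x) = (CFC.rpow A μ * CFC.rpow A μ) x := rfl
      _ = CFC.rpow A (2 * μ) x := by rw [e]
      _ = 0 := h2
  intro μ hμ
  obtain ⟨n, hn⟩ : ∃ n : ℕ, 1 ≤ 2 ^ n * μ := by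
    obtain ⟨n, hn⟩ := pow_unbounded_of_one_lt (1 / μ) (by norm_num : (1:ℝ) < 2)
    refine ⟨n, ?_⟩
    rw [← div_le_iff₀ hμ]
    exact hn.le
  induction n generalizing μ with
  | zero => exact hone μ (by simpa using hn)
  | succ n ih =>
      apply hhalf μ hμ
      apply ih (2 * μ) (by linarith)
      calc (1:ℝ) ≤ 2 ^ (n+1) * μ := hn
        _ = 2 ^ n * (2 * μ) := by ring

theorem selfAdjoint_of_quasinormal_of_aluthge_adjoint_eq_self
    (l : ℝ) (hl : l ∈ Set.Ioo (0 : ℝ) 1)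
    (S : H →L[ℂ] H) (hS : IsQuasinormal S)
    (h : aluthge l (star S) = S) : S = star S := by
  obtain ⟨hl0, hl1⟩ := hl
  by_cases hex : ∃ V, IsPolarPartialIsom (star S) V
  case neg =>
    have hp0 : polarIsom (star S) = 0 := by
      rw [polarIsom, dif_neg hex]
    have h0 : S = 0 := by
      rw [← h, aluthge, hp0, mul_zero, zero_mul]
    rw [h0, star_zero]
  case pos =>
    have hp : IsPolarPartialIsom (star S) (polarIsom (star S)) := by
      rw [polarIsom, dif_pos hex]
      exact hex.choose_spec
    obtain ⟨-, -, hVA⟩ := hp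
    set V := polarIsom (star S) with hVdef
    set A := opAbs (star S) with hAdef
    rw [aluthge] at h
    -- `h : CFC.rpow A l * V * CFC.rpow A (1 - l) = S`
    have hA_sqrt : A = CFC.sqrt (S * star S) := by
      rw [hAdef]
      unfold opAbs
      rw [star_star]
    have hNpos : (0 : H →L[ℂ] H) ≤ S * star S := by
      have h0 := star_mul_self_nonneg (star S)
      rwa [star_star] at h0
    have hApos : (0 : H →L[ℂ] H) ≤ A := by rw [hA_sqrt]; exact CFC.sqrt_nonneg (S * star S)
    have hAsa : IsSelfAdjoint A := .of_nonneg hApos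
    have hA2 : A * A = S * star S := by
      rw [hA_sqrt]
      exact CFC.sqrt_mul_sqrt_self _ hNpos
    have hadd : CFC.rpow A (1 - l) * CFC.rpow A l = A := by
      rw [aux_rpow_add A hApos (by linarith) hl0]
      rw [show (1 - l) + l = 1 by ring]
      exact CFC.rpow_one A hApos
    have key1 : S * CFC.rpow A l = CFC.rpow A l * star S := by
      calc S * CFC.rpow A l
          = CFC.rpow A l * V * CFC.rpow A (1 - l) * CFC.rpow A l := by rw [h]
        _ = CFC.rpow A l * (V * (CFC.rpow A (1 - l) * CFC.rpow A l)) := by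
            rw [mul_assoc, mul_assoc]
        _ = CFC.rpow A l * (V * A) := by rw [hadd]
        _ = CFC.rpow A l * star S := by rw [← hVA]
    -- kernel facts
    have hkerA_Sstar : ∀ y : H, A y = 0 → star S y = 0 := by
      intro y hy
      have hSSy : S (star S y) = 0 := by
        calc S (star S y) = (S * star S) y := rfl
          _ = (A * A) y := by rw [hA2]
          _ = A (A y) := rfl
          _ = 0 := by rw [hy, map_zero]
      have h2 := ContinuousLinearMap.adjoint_inner_left S (star S y) y
      rw [← ContinuousLinearMap.star_eq_adjoint, hSSy, inner_zero_right] at h2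
      exact inner_self_eq_zero.mp h2
    have hkerN_A : ∀ y : H, (S * star S) y = 0 → A y = 0 := by
      intro y hy
      apply aux_apply_eq_zero_of_sq_apply A hAsa
      calc A (A y) = (A * A) y := rfl
        _ = (S * star S) y := by rw [hA2]
        _ = 0 := hy
    have hkerA_S : ∀ y : H, A y = 0 → S y = 0 := by
      intro y hy
      have h1 : CFC.rpow A (1 - l) y = 0 :=
        aux_rpow_apply_eq_zero A hApos hy (1 - l) (by linarith)
      calc S y = (CFC.rpow A l * V * CFC.rpow A (1 - l)) y := by rw [h]
        _ = CFC.rpow A l (V (CFC.rpow A (1 - l) y)) := rfl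
        _ = 0 := by rw [h1, map_zero, map_zero]
    -- the defect operator
    have hq : S * (star S * S) = (star S * S) * S := hS
    have hES : (S * star S - star S * S) * S = 0 := by
      rw [sub_mul, mul_assoc S (star S) S, hq, sub_self]
    have hEsa : star (S * star S - star S * S) = S * star S - star S * S := by
      simp only [star_sub, star_mul, star_star]
    have hNE : (S * star S) * (S * star S - star S * S) = 0 := by
      have h1 : (S * star S - star S * S) * (S * star S) = 0 := by
        rw [← mul_assoc, hES, zero_mul]
      have h2 := congrArg star h1
      rwa [star_mul, hEsa, star_zero,
        show star (S * star S) = S * star S by simp only [star_mul, star_star]] at h2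
    have hE0 : S * star S - star S * S = 0 := by
      ext y
      have h1 : (S * star S) ((S * star S - star S * S) y) = 0 := by
        calc (S * star S) ((S * star S - star S * S) y)
            = ((S * star S) * (S * star S - star S * S)) y := rfl
          _ = 0 := by rw [hNE]; rfl
      have h2 : A ((S * star S - star S * S) y) = 0 := hkerN_A _ h1
      have h3 : S ((S * star S - star S * S) y) = 0 := hkerA_S _ h2
      have h4 : star S ((S * star S - star S * S) y) = 0 := hkerA_Sstar _ h2
      have h5 : (S * star S - star S * S) ((S * star S - star S * S) y) = 0 := by
        rw [ContinuousLinearMap.sub_apply]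
        calc (S * star S) ((S * star S - star S * S) y)
              - (star S * S) ((S * star S - star S * S) y)
            = S (star S ((S * star S - star S * S) y))
              - star S (S ((S * star S - star S * S) y)) := rfl
          _ = 0 := by rw [h3, h4, map_zero, map_zero, sub_zero]
      have h6 := aux_apply_eq_zero_of_sq_apply (S * star S - star S * S) hEsa h5
      simpa using h6
    have hnormal : S * star S = star S * S := by rwa [sub_eq_zero] at hE0
    have hcommN : Commute S (S * star S) := by
      show S * (S * star S) = (S * star S) * S
      calc S * (S * star S) = S * (star S * S) := by rw [hnormal]
        _ = (star S * S) * S := hq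
        _ = (S * star S) * S := by rw [hnormal]
    have hAl : Commute S (CFC.rpow A l) := by
      rw [hA_sqrt, aux_rpow_sqrt_eq_cfc (S * star S) hl0]
      exact aux_commute_cfc_nnreal S _ hNpos hcommN _
    have hAlG : CFC.rpow A l * (S - star S) = 0 := by
      rw [mul_sub, ← key1, ← hAl.eq, sub_self]
    have hAG : A * (S - star S) = 0 := by
      calc A * (S - star S) = CFC.rpow A (1 - l) * CFC.rpow A l * (S - star S) := by rw [hadd]
        _ = CFC.rpow A (1 - l) * (CFC.rpow A l * (S - star S)) := by rw [mul_assoc]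
        _ = 0 := by rw [hAlG, mul_zero]
    have hGy : ∀ y : H, A ((S - star S) y) = 0 := by
      intro y
      calc A ((S - star S) y) = (A * (S - star S)) y := rfl
        _ = 0 := by rw [hAG]; rfl
    have hstarGG : star (S - star S) * (S - star S) = 0 := by
      ext y
      have h3 : S ((S - star S) y) = 0 := hkerA_S _ (hGy y)
      have h4 : star S ((S - star S) y) = 0 := hkerA_Sstar _ (hGy y)
      calc (star (S - star S) * (S - star S)) y
          = star (S - star S) ((S - star S) y) := rfl
        _ = (star S - S) ((S - star S) y) := by rw [star_sub, star_star]
        _ = star S ((S - star S) y) - S ((S - star S) y) := rfl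
        _ = 0 := by rw [h3, h4, sub_zero]
      -- note: goal `... = (0 : H →L[ℂ] H) y` handled below if needed
    have hG0 : S - star S = 0 := by
      have := (CStarRing.star_mul_self_eq_zero_iff (S - star S)).mp hstarGG
      exact this
    rw [← sub_eq_zero]
    exact hG0
end
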